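/- Let $\alpha, \beta : [0,1] \to \mathbb R$ be differentiable with $\alpha_t, \beta_t \ne 0$ for $t \in (0,1)$, and let $X_t = \alpha_t X_0 + \beta_t X_1$ with $X_0, X_1$ independent. Then the conditional expectation of the time derivative satisfies $\mathbb E[\dot X_t \mid X_t = x] = \frac{\dot\alpha_t}{\alpha_t}x + \Big(\dot\beta_t - \frac{\dot\alpha_t\beta_t}{\alpha_t}\Big)\mathbb E[X_1 \mid X_t = x]$, where $\dot X_t = \dot\alpha_t X_0 + \dot\beta_t X_1$. -/

import Mathlib

open MeasureTheory ProbabilityTheory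

/-- For the interpolant `X_t = α_t X₀ + β_t X₁` with `X₀, X₁` independent and
`α_t, β_t ≠ 0`, the conditional expectation of `Ẋ_t = α̇_t X₀ + β̇_t X₁` given `X_t`
satisfies `E[Ẋ_t | X_t] = (α̇_t/α_t)X_t + (β̇_t - α̇_tβ_t/α_t)E[X₁ | X_t]`. -/
theorem stmt_19 (d : ℕ) (Ω : Type*) [MeasurableSpace Ω] (μ : Measure Ω)
    [IsProbabilityMeasure μ]
    (X0 X1 : Ω → EuclideanSpace ℝ (Fin d))
    (hX0 : Measurable X0) (hX1 : Measurable X1)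
    (hX0int : Integrable X0 μ) (hX1int : Integrable X1 μ)
    (hindep : IndepFun X0 X1 μ)
    (α β : ℝ → ℝ) (t : ℝ) (ht : t ∈ Set.Ioo (0 : ℝ) 1)
    (hα : DifferentiableAt ℝ α t) (hβ : DifferentiableAt ℝ β t)
    (hαt : α t ≠ 0) (hβt : β t ≠ 0)
    (Xt : Ω → EuclideanSpace ℝ (Fin d)) (hXt : Xt = fun ω => α t • X0 ω + β t • X1 ω)
    (mXt : MeasurableSpace Ω)
    (hmXt : mXt = MeasurableSpace.comap Xt inferInstance) :
    ∀ᵐ ω ∂μ,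
      (μ[fun ω' => deriv α t • X0 ω' + deriv β t • X1 ω' | mXt]) ω
        = (deriv α t / α t) • Xt ω
          + (deriv β t - deriv α t * β t / α t) • (μ[X1 | mXt]) ω := by
  rename_i m0 hprob
  have hXtm : @Measurable Ω _ m0 _ Xt := by
    rw [hXt]
    exact (((continuous_const_smul (α t)).measurable.comp hX0).add
      ((continuous_const_smul (β t)).measurable.comp hX1))
  have hm : mXt ≤ m0 := by
    rw [hmXt]; exact hXtm.comap_le
  have hXtint : Integrable Xt μ := by
    rw [hXt]; exact (hX0int.smul (α t)).add (hX1int.smul (β t))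
  set c := deriv α t / α t with hc
  set c' := deriv β t - deriv α t * β t / α t with hc'
  have hfun : (fun ω' => deriv α t • X0 ω' + deriv β t • X1 ω')
      = fun ω' => c • Xt ω' + c' • X1 ω' := by
    funext ω'
    rw [hXt]
    simp only [smul_add, smul_smul, hc, hc']
    match_scalars <;> field_simp <;> ring
  rw [hfun]
  have hsm : StronglyMeasurable[mXt] Xt := by
    refine Measurable.stronglyMeasurable ?_
    rw [hmXt]
    exact Measurable.of_comap_le le_rfl
  have h1 : μ[fun ω' => c • Xt ω' + c' • X1 ω' | mXt]
      =ᵐ[μ] (c • μ[Xt|mXt]) + (c' • μ[X1|mXt]) := by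
    refine (condExp_add (hXtint.smul c) (hX1int.smul c') (m := mXt)).trans ?_
    exact Filter.EventuallyEq.add (condExp_smul c Xt (m := mXt)) (condExp_smul c' X1 (m := mXt))
  have h2 : μ[Xt|mXt] = Xt := condExp_of_stronglyMeasurable (μ := μ) hm hsm hXtint
  filter_upwards [h1] with ω hω
  simp [hω, h2]
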